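/- Let ℓ, s, t be natural numbers with s ≤ t and let p ∈ [0, 1] be a real number. Let G be a random ordered graph (a random variable on a probability space taking values in ordered graphs) such that for every integer k with s ≤ k ≤ t, with probability at least p the graph G has a k-partition each of whose parts contains at least ℓ/k edges (i.e., k · |E(b_i, m_i, b_{i+1})| ≥ ℓ for every part). Then the expected number of edges of G is at least (p·ℓ/2) · (⌊log_4 t⌋ − ⌈log_4 s⌉). -/

import Mathlib

/-- An ordered graph on vertex set `{0, ..., N-1}`: every edge `(u, v)` satisfies
`u < v` and `v < N`. -/
def IsOrderedGraph (N : ℕ) (E : Finset (ℕ × ℕ)) : Prop :=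
  ∀ e ∈ E, e.1 < e.2 ∧ e.2 < N

/-- `E(a, m, b)`: the set of edges `(u, v) ∈ E` with `a ≤ u < m` and `m ≤ v < b`. -/
def edgesBetween (E : Finset (ℕ × ℕ)) (a m b : ℕ) : Finset (ℕ × ℕ) :=
  E.filter fun e => a ≤ e.1 ∧ e.1 < m ∧ m ≤ e.2 ∧ e.2 < b

/-- A `k`-partition of an ordered graph on `{0, ..., N-1}`: a sequence
`0 = b_0 ≤ m_0 ≤ b_1 ≤ m_1 ≤ ⋯ ≤ m_{k-1} ≤ b_k = N`. -/
def IsPartition (N k : ℕ) (b m : ℕ → ℕ) : Prop :=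
  b 0 = 0 ∧ b k = N ∧ ∀ i < k, b i ≤ m i ∧ m i ≤ b (i + 1)

lemma geom3 : ∀ n : ℕ, 3 * ∑ d ∈ Finset.range n, 4 ^ d + 1 = 4 ^ n := by
  intro n
  induction n with
  | zero => simp
  | succ n ih => rw [Finset.sum_range_succ, pow_succ]; omega

lemma key_lemma (ℓ a : ℕ) (E : Finset (ℕ × ℕ)) (S : Finset ℕ)
    (b m : ℕ → ℕ → ℕ)
    (hbm : ∀ j ∈ S, ∀ i < 4 ^ (a + j), b j i ≤ m j i ∧ m j i ≤ b j (i + 1))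
    (hcard : ∀ j ∈ S, ∀ i < 4 ^ (a + j),
      ℓ ≤ 4 ^ (a + j) * (edgesBetween E (b j i) (m j i) (b j (i + 1))).card) :
    ℓ * S.card ≤ 2 * E.card := by
  classical
  have hkpos : ∀ j : ℕ, 0 < 4 ^ (a + j) := fun j => Nat.pow_pos (by norm_num)
  -- monotonicity of the b's
  have hmono : ∀ j ∈ S, ∀ x y : ℕ, x ≤ y → y ≤ 4 ^ (a + j) → b j x ≤ b j y := by
    intro j hj x y hxy hyk
    induction y with
    | zero => rw [Nat.le_zero.mp hxy]
    | succ n ih =>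
      rcases Nat.eq_or_lt_of_le hxy with rfl | hlt
      · exact le_refl _
      · have h1 : b j x ≤ b j n := ih (by omega) (by omega)
        have h2 := hbm j hj n (by omega)
        omega
  set Part : ℕ → ℕ → Finset (ℕ × ℕ) :=
    fun j i => edgesBetween E (b j i) (m j i) (b j (i + 1)) with hPart
  have hPartMem : ∀ j i e, e ∈ Part j i ↔
      e ∈ E ∧ b j i ≤ e.1 ∧ e.1 < m j i ∧ m j i ≤ e.2 ∧ e.2 < b j (i + 1) := by
    intro j i e
    simp [hPart, edgesBetween, Finset.mem_filter, and_assoc]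
  set Cl : ℕ → Finset ℕ := fun j => (Finset.range (4 ^ (a + j))).filter
    (fun i => ∀ j' ∈ S, j' < j → ∀ i' < 4 ^ (a + j'),
      ¬ (b j i < m j' i' ∧ m j' i' < b j (i + 1))) with hCl
  set Y : ℕ → Finset (ℕ × ℕ) := fun j => (Cl j).biUnion (Part j) with hY
  -- within-scale disjointness
  have hdisj_part : ∀ j ∈ S, ∀ i₁ ∈ Finset.range (4 ^ (a + j)),
      ∀ i₂ ∈ Finset.range (4 ^ (a + j)),
      i₁ ≠ i₂ → Disjoint (Part j i₁) (Part j i₂) := by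
    intro j hj i₁ h₁ i₂ h₂ hne
    simp only [Finset.mem_range] at h₁ h₂
    rw [Finset.disjoint_left]
    intro e he₁ he₂
    rw [hPartMem] at he₁ he₂
    rcases Nat.lt_or_ge i₁ i₂ with h | h
    · have hb : b j (i₁ + 1) ≤ b j i₂ := hmono j hj _ _ (by omega) (by omega)
      have h2 := hbm j hj i₁ h₁
      omega
    · have hlt : i₂ < i₁ := by omega
      have hb : b j (i₂ + 1) ≤ b j i₁ := hmono j hj _ _ (by omega) (by omega)
      have h2 := hbm j hj i₂ h₂
      omega
  have hClsub : ∀ j, Cl j ⊆ Finset.range (4 ^ (a + j)) := by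
    intro j
    rw [hCl]
    exact Finset.filter_subset _ _
  -- card of Y j
  have hYcard : ∀ j ∈ S, (Y j).card = ∑ i ∈ Cl j, (Part j i).card := by
    intro j hj
    refine Finset.card_biUnion ?_
    intro i₁ h₁ i₂ h₂ hne
    exact hdisj_part j hj i₁ (hClsub j h₁) i₂ (hClsub j h₂) hne
  -- per part card lower bound
  have hqle : ∀ j ∈ S, ∀ i < 4 ^ (a + j),
      (ℓ + 4 ^ (a + j) - 1) / 4 ^ (a + j) ≤ (Part j i).card := by
    intro j hj i hi
    have hc : ℓ ≤ 4 ^ (a + j) * (Part j i).card := hcard j hj i hi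
    have hlt : (ℓ + 4 ^ (a + j) - 1) / 4 ^ (a + j) < (Part j i).card + 1 := by
      rw [Nat.div_lt_iff_lt_mul (hkpos j)]
      have heq : ((Part j i).card + 1) * 4 ^ (a + j)
          = 4 ^ (a + j) * (Part j i).card + 4 ^ (a + j) := by ring
      rw [heq]
      have := hkpos j
      omega
    omega
  have hkq : ∀ j : ℕ, ℓ ≤ 4 ^ (a + j) * ((ℓ + 4 ^ (a + j) - 1) / 4 ^ (a + j)) := by
    intro j
    have h1 := Nat.div_add_mod (ℓ + 4 ^ (a + j) - 1) (4 ^ (a + j))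
    have h2 : (ℓ + 4 ^ (a + j) - 1) % 4 ^ (a + j) < 4 ^ (a + j) :=
      Nat.mod_lt _ (hkpos j)
    have := hkpos j
    omega
  -- contamination bound
  have hct : ∀ j ∈ S, 3 * ((Finset.range (4 ^ (a + j))) \ Cl j).card ≤ 4 ^ (a + j) - 1 := by
    intro j hj
    have hwit : ∀ i ∈ (Finset.range (4 ^ (a + j))) \ Cl j, ∃ x : ℕ,
        x ∈ ((S.filter (· < j)).biUnion
          (fun j' => (Finset.range (4 ^ (a + j'))).image (m j'))) ∧
        b j i < x ∧ x < b j (i + 1) := by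
      intro i hi
      rw [Finset.mem_sdiff] at hi
      have hir := hi.1
      have hncl := hi.2
      rw [hCl] at hncl
      simp only [Finset.mem_filter, not_and] at hncl
      have := hncl hir
      push_neg at this
      obtain ⟨j', hj', hlt, i', hi', hx1, hx2⟩ := this
      refine ⟨m j' i', ?_, hx1, hx2⟩
      rw [Finset.mem_biUnion]
      exact ⟨j', Finset.mem_filter.2 ⟨hj', hlt⟩, Finset.mem_image.2 ⟨i', Finset.mem_range.2 hi', rfl⟩⟩
    choose f hf1 hf2 hf3 using hwit
    set g : ℕ → ℕ := fun i => if h : i ∈ (Finset.range (4 ^ (a + j))) \ Cl j then f i h else 0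
      with hg
    have hgspec : ∀ i (hi : i ∈ (Finset.range (4 ^ (a + j))) \ Cl j), g i = f i hi := by
      intro i hi
      rw [hg]
      exact dif_pos hi
    have hcard1 : ((Finset.range (4 ^ (a + j))) \ Cl j).card ≤
        ((S.filter (· < j)).biUnion
          (fun j' => (Finset.range (4 ^ (a + j'))).image (m j'))).card := by
      apply Finset.card_le_card_of_injOn g
      · intro i hi
        rw [hgspec i hi]
        exact hf1 i hi
      · intro i₁ h₁ i₂ h₂ heq
        rw [hgspec i₁ h₁, hgspec i₂ h₂] at heq
        by_contra hne
        have hi₁ : i₁ < 4 ^ (a + j) := Finset.mem_range.1 (Finset.mem_sdiff.1 h₁).1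
        have hi₂ : i₂ < 4 ^ (a + j) := Finset.mem_range.1 (Finset.mem_sdiff.1 h₂).1
        have ha1 := hf2 i₁ h₁
        have ha2 := hf3 i₁ h₁
        have hb1 := hf2 i₂ h₂
        have hb2 := hf3 i₂ h₂
        rcases Nat.lt_or_ge i₁ i₂ with h | h
        · have hb : b j (i₁ + 1) ≤ b j i₂ := hmono j hj _ _ (by omega) (by omega)
          omega
        · have hlt2 : i₂ < i₁ := by omega
          have hb : b j (i₂ + 1) ≤ b j i₁ := hmono j hj _ _ (by omega) (by omega)
          omega
    have hcard2 : ((S.filter (· < j)).biUnion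
          (fun j' => (Finset.range (4 ^ (a + j'))).image (m j'))).card ≤
        ∑ j' ∈ S.filter (· < j), 4 ^ (a + j') := by
      refine le_trans (Finset.card_biUnion_le) ?_
      refine Finset.sum_le_sum ?_
      intro j' _
      exact le_trans (Finset.card_image_le) (by rw [Finset.card_range])
    have hcard3 : ∑ j' ∈ S.filter (· < j), 4 ^ (a + j') ≤
        ∑ d ∈ Finset.range (a + j), 4 ^ d := by
      have himg : ∑ j' ∈ S.filter (· < j), 4 ^ (a + j')
          = ∑ d ∈ (S.filter (· < j)).image (fun j' => a + j'), 4 ^ d := by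
        rw [Finset.sum_image]
        intro x _ y _ hxy
        exact Nat.add_left_cancel hxy
      rw [himg]
      apply Finset.sum_le_sum_of_subset
      intro d hd
      rw [Finset.mem_image] at hd
      obtain ⟨j', hj', rfl⟩ := hd
      rw [Finset.mem_filter] at hj'
      rw [Finset.mem_range]
      omega
    have hgeom := geom3 (a + j)
    omega
  -- per-scale lower bound: ℓ ≤ 2 * (Y j).card
  have hYlb : ∀ j ∈ S, ℓ ≤ 2 * (Y j).card := by
    intro j hj
    set q : ℕ := (ℓ + 4 ^ (a + j) - 1) / 4 ^ (a + j) with hqdef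
    have h1 : (Cl j).card + ((Finset.range (4 ^ (a + j))) \ Cl j).card = 4 ^ (a + j) := by
      rw [Finset.card_sdiff_of_subset (hClsub j), Finset.card_range]
      have := Finset.card_le_card (hClsub j)
      rw [Finset.card_range] at this
      omega
    have h2 : 2 * 4 ^ (a + j) + 1 ≤ 3 * (Cl j).card := by
      have := hct j hj
      have := hkpos j
      omega
    have h3 : q * (Cl j).card ≤ (Y j).card := by
      rw [hYcard j hj]
      calc q * (Cl j).card = ∑ _i ∈ Cl j, q := by
            rw [Finset.sum_const, smul_eq_mul]; ring
        _ ≤ ∑ i ∈ Cl j, (Part j i).card := by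
            refine Finset.sum_le_sum ?_
            intro i hi
            exact hqle j hj i (Finset.mem_range.1 (hClsub j hi))
    have h4 : ℓ ≤ 4 ^ (a + j) * q := hkq j
    nlinarith [h1, h2, h3, h4]
  -- cross-scale disjointness
  have hYdisj : ∀ j₁ ∈ S, ∀ j₂ ∈ S, j₁ ≠ j₂ → Disjoint (Y j₁) (Y j₂) := by
    have main : ∀ j₁ ∈ S, ∀ j₂ ∈ S, j₁ < j₂ → Disjoint (Y j₁) (Y j₂) := by
      intro j₁ hj₁ j₂ hj₂ hlt
      rw [Finset.disjoint_left]
      intro e he₁ he₂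
      rw [hY] at he₁ he₂
      simp only [Finset.mem_biUnion] at he₁ he₂
      obtain ⟨i₁, hi₁, hei₁⟩ := he₁
      obtain ⟨i₂, hi₂, hei₂⟩ := he₂
      rw [hPartMem] at hei₁ hei₂
      have hi₁r : i₁ < 4 ^ (a + j₁) := Finset.mem_range.1 (hClsub j₁ hi₁)
      rw [hCl, Finset.mem_filter] at hi₂
      have hclean := hi₂.2 j₁ hj₁ hlt i₁ hi₁r
      exact hclean ⟨by omega, by omega⟩
    intro j₁ hj₁ j₂ hj₂ hne
    rcases Nat.lt_or_ge j₁ j₂ with h | h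
    · exact main j₁ hj₁ j₂ hj₂ h
    · exact (main j₂ hj₂ j₁ hj₁ (by omega)).symm
  -- sum up
  have hsum : ∑ j ∈ S, (Y j).card ≤ E.card := by
    rw [← Finset.card_biUnion hYdisj]
    apply Finset.card_le_card
    intro e he
    rw [Finset.mem_biUnion] at he
    obtain ⟨j, _, he⟩ := he
    rw [hY] at he
    rw [Finset.mem_biUnion] at he
    obtain ⟨i, _, he⟩ := he
    exact (Finset.mem_filter.1 he).1
  calc ℓ * S.card = ∑ _j ∈ S, ℓ := by rw [Finset.sum_const, smul_eq_mul]; ring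
    _ ≤ ∑ j ∈ S, 2 * (Y j).card := Finset.sum_le_sum hYlb
    _ = 2 * ∑ j ∈ S, (Y j).card := by rw [Finset.mul_sum]
    _ ≤ 2 * E.card := by omega

open MeasureTheory Real in
theorem stmt_2 {Ω : Type*} [MeasurableSpace Ω] (μ : Measure Ω) [IsProbabilityMeasure μ]
    (ℓ s t : ℕ) (hst : s ≤ t) (p : ℝ) (hp0 : 0 ≤ p) (hp1 : p ≤ 1)
    (G : Ω → Finset (ℕ × ℕ)) (N : Ω → ℕ)
    (hord : ∀ ω, IsOrderedGraph (N ω) (G ω))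
    (hmeas : ∀ k, s ≤ k → k ≤ t → MeasurableSet {ω | ∃ b m : ℕ → ℕ,
      IsPartition (N ω) k b m ∧
      ∀ i < k, ℓ ≤ k * (edgesBetween (G ω) (b i) (m i) (b (i + 1))).card})
    (hprob : ∀ k, s ≤ k → k ≤ t → ENNReal.ofReal p ≤ μ {ω | ∃ b m : ℕ → ℕ,
      IsPartition (N ω) k b m ∧
      ∀ i < k, ℓ ≤ k * (edgesBetween (G ω) (b i) (m i) (b (i + 1))).card}) :
    ENNReal.ofReal (p * ℓ / 2 * ((⌊logb 4 (t : ℝ)⌋ - ⌈logb 4 (s : ℝ)⌉ : ℤ) : ℝ))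
      ≤ ∫⁻ ω, ((G ω).card : ENNReal) ∂μ := by
  classical
  set A : ℤ := ⌈logb 4 (s : ℝ)⌉ with hA
  set B : ℤ := ⌊logb 4 (t : ℝ)⌋ with hB
  by_cases hD : B - A ≤ 0
  · have h0 : p * ℓ / 2 * ((B - A : ℤ) : ℝ) ≤ 0 := by
      apply mul_nonpos_of_nonneg_of_nonpos
      · positivity
      · exact_mod_cast Int.cast_nonpos.mpr hD
    rw [ENNReal.ofReal_eq_zero.mpr h0]
    exact zero_le
  push_neg at hD
  have hA0 : 0 ≤ A := by
    rcases Nat.eq_zero_or_pos s with rfl | hs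
    · simp [hA, Real.logb]
    · exact Int.ceil_nonneg (Real.logb_nonneg (by norm_num) (by exact_mod_cast hs))
  have hB1 : 1 ≤ B := by omega
  have ht0 : 0 < t := by
    by_contra h
    have : t = 0 := by omega
    subst this
    simp [hB, Real.logb] at hB1
  set An : ℕ := A.toNat with hAn
  set Dn : ℕ := (B - A).toNat with hDn
  have hAnA : (An : ℤ) = A := Int.toNat_of_nonneg hA0
  have hDnpos : 0 < Dn := by omega
  have hDnB : (An : ℤ) + (Dn : ℤ) = B := by
    rw [hAnA, hDn, Int.toNat_of_nonneg (by omega)]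
    ring
  -- the scales are in range
  have hsle : ∀ i, i < Dn → s ≤ 4 ^ (An + i) := by
    intro i _
    rcases Nat.eq_zero_or_pos s with rfl | hs
    · exact Nat.zero_le _
    have h1 : (s : ℝ) ≤ 4 ^ (An : ℕ) := by
      have h2 : (s : ℝ) = (4 : ℝ) ^ (logb 4 (s : ℝ)) :=
        (Real.rpow_logb (by norm_num) (by norm_num) (by exact_mod_cast hs)).symm
      have h3 : logb 4 (s : ℝ) ≤ (An : ℝ) := by
        rw [show ((An : ℕ) : ℝ) = ((An : ℤ) : ℝ) by push_cast; ring, hAnA]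
        exact Int.le_ceil _
      calc (s : ℝ) = (4 : ℝ) ^ (logb 4 (s : ℝ)) := h2
        _ ≤ (4 : ℝ) ^ ((An : ℕ) : ℝ) :=
            Real.rpow_le_rpow_of_exponent_le (by norm_num) h3
        _ = (4 : ℝ) ^ (An : ℕ) := Real.rpow_natCast 4 An
    have h4 : (s : ℝ) ≤ ((4 ^ An : ℕ) : ℝ) := by push_cast; exact h1
    have h5 : s ≤ 4 ^ An := by exact_mod_cast h4
    calc s ≤ 4 ^ An := h5
      _ ≤ 4 ^ (An + i) := Nat.pow_le_pow_right (by norm_num) (by omega)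
  have htle : ∀ i, i < Dn → 4 ^ (An + i) ≤ t := by
    intro i hi
    have h1 : ((4 ^ (An + i) : ℕ) : ℝ) ≤ (t : ℝ) := by
      have h3 : ((An + i : ℕ) : ℝ) ≤ logb 4 (t : ℝ) := by
        have h4 : ((An + i : ℕ) : ℤ) ≤ B := by push_cast; omega
        calc ((An + i : ℕ) : ℝ) = (((An + i : ℕ) : ℤ) : ℝ) := by push_cast; ring
          _ ≤ (B : ℝ) := by exact_mod_cast h4
          _ ≤ logb 4 (t : ℝ) := Int.floor_le _
      calc ((4 ^ (An + i) : ℕ) : ℝ) = (4 : ℝ) ^ ((An + i : ℕ) : ℝ) := by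
            rw [Real.rpow_natCast]; push_cast; ring
        _ ≤ (4 : ℝ) ^ (logb 4 (t : ℝ)) :=
            Real.rpow_le_rpow_of_exponent_le (by norm_num) h3
        _ = (t : ℝ) := Real.rpow_logb (by norm_num) (by norm_num) (by exact_mod_cast ht0)
    exact_mod_cast h1
  -- the events
  set Aset : ℕ → Set Ω := fun i => {ω | ∃ b m : ℕ → ℕ,
      IsPartition (N ω) (4 ^ (An + i)) b m ∧
      ∀ i' < 4 ^ (An + i),
        ℓ ≤ 4 ^ (An + i) * (edgesBetween (G ω) (b i') (m i') (b (i' + 1))).card} with hAset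
  have hAm : ∀ i, i < Dn → MeasurableSet (Aset i) :=
    fun i hi => hmeas _ (hsle i hi) (htle i hi)
  have hAp : ∀ i, i < Dn → ENNReal.ofReal p ≤ μ (Aset i) :=
    fun i hi => hprob _ (hsle i hi) (htle i hi)
  set f : ℕ → Ω → ENNReal :=
    fun i ω => (Aset i).indicator (fun _ => (ℓ : ENNReal)) ω with hf
  -- pointwise bound
  have hpoint : ∀ ω, (∑ i ∈ Finset.range Dn, f i ω) ≤ 2 * ((G ω).card : ENNReal) := by
    intro ω
    set Sω : Finset ℕ := (Finset.range Dn).filter (fun i => ω ∈ Aset i) with hSω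
    have hsum : (∑ i ∈ Finset.range Dn, f i ω) = (Sω.card : ENNReal) * (ℓ : ENNReal) := by
      rw [hSω, hf]
      simp only [Set.indicator_apply]
      rw [← Finset.sum_filter, Finset.sum_const, nsmul_eq_mul]
    rw [hsum]
    have hch : ∀ j ∈ Sω, ∃ bm : (ℕ → ℕ) × (ℕ → ℕ),
        (∀ i < 4 ^ (An + j), bm.1 i ≤ bm.2 i ∧ bm.2 i ≤ bm.1 (i + 1)) ∧
        (∀ i < 4 ^ (An + j),
          ℓ ≤ 4 ^ (An + j) * (edgesBetween (G ω) (bm.1 i) (bm.2 i) (bm.1 (i + 1))).card) := by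
      intro j hj
      have hω : ω ∈ Aset j := (Finset.mem_filter.1 hj).2
      rw [hAset] at hω
      obtain ⟨b, m, ⟨_, _, hbm⟩, hc⟩ := hω
      exact ⟨⟨b, m⟩, hbm, hc⟩
    choose F hF1 hF2 using hch
    set bb : ℕ → ℕ → ℕ := fun j => if h : j ∈ Sω then (F j h).1 else fun _ => 0 with hbb
    set mm : ℕ → ℕ → ℕ := fun j => if h : j ∈ Sω then (F j h).2 else fun _ => 0 with hmm
    have hbbspec : ∀ j (h : j ∈ Sω), bb j = (F j h).1 := fun j h => by rw [hbb]; exact dif_pos h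
    have hmmspec : ∀ j (h : j ∈ Sω), mm j = (F j h).2 := fun j h => by rw [hmm]; exact dif_pos h
    have hkey := key_lemma ℓ An (G ω) Sω bb mm
      (fun j hj i hi => by rw [hbbspec j hj, hmmspec j hj]; exact hF1 j hj i hi)
      (fun j hj i hi => by rw [hbbspec j hj, hmmspec j hj]; exact hF2 j hj i hi)
    have hcast : ((ℓ * Sω.card : ℕ) : ENNReal) ≤ ((2 * (G ω).card : ℕ) : ENNReal) :=
      Nat.cast_le.mpr hkey
    push_cast at hcast
    calc (Sω.card : ENNReal) * (ℓ : ENNReal) = (ℓ : ENNReal) * (Sω.card : ENNReal) := by ring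
      _ ≤ 2 * ((G ω).card : ENNReal) := hcast
  -- integrate
  have hint : (Dn : ENNReal) * ((ℓ : ENNReal) * ENNReal.ofReal p)
      ≤ 2 * ∫⁻ ω, ((G ω).card : ENNReal) ∂μ := by
    have h1 : ∫⁻ ω, (∑ i ∈ Finset.range Dn, f i ω) ∂μ
        = ∑ i ∈ Finset.range Dn, ∫⁻ ω, f i ω ∂μ := by
      apply lintegral_finset_sum
      intro i hi
      exact Measurable.indicator measurable_const (hAm i (Finset.mem_range.1 hi))
    have h2 : ∀ i ∈ Finset.range Dn,
        (ℓ : ENNReal) * ENNReal.ofReal p ≤ ∫⁻ ω, f i ω ∂μ := by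
      intro i hi
      rw [hf]
      rw [lintegral_indicator_const (hAm i (Finset.mem_range.1 hi))]
      exact mul_le_mul_right (hAp i (Finset.mem_range.1 hi)) _
    calc (Dn : ENNReal) * ((ℓ : ENNReal) * ENNReal.ofReal p)
        = ∑ _i ∈ Finset.range Dn, (ℓ : ENNReal) * ENNReal.ofReal p := by
          rw [Finset.sum_const, Finset.card_range, nsmul_eq_mul]
      _ ≤ ∑ i ∈ Finset.range Dn, ∫⁻ ω, f i ω ∂μ := Finset.sum_le_sum h2
      _ = ∫⁻ ω, (∑ i ∈ Finset.range Dn, f i ω) ∂μ := h1.symm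
      _ ≤ ∫⁻ ω, 2 * ((G ω).card : ENNReal) ∂μ := lintegral_mono hpoint
      _ = 2 * ∫⁻ ω, ((G ω).card : ENNReal) ∂μ := lintegral_const_mul' 2 _ (by norm_num)
  -- conclude
  have hcastD : ((B - A : ℤ) : ℝ) = (Dn : ℝ) := by
    have h := Int.toNat_of_nonneg (show (0:ℤ) ≤ B - A by omega)
    rw [hDn]
    exact_mod_cast h.symm
  rw [hcastD]
  have h2 : (2 : ENNReal) * ENNReal.ofReal (p * ℓ / 2 * (Dn : ℝ))
      ≤ 2 * ∫⁻ ω, ((G ω).card : ENNReal) ∂μ := by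
    refine le_trans (le_of_eq ?_) hint
    rw [← ENNReal.ofReal_ofNat 2, ← ENNReal.ofReal_mul (by norm_num)]
    have heq : (2 : ℝ) * (p * ℓ / 2 * (Dn : ℝ)) = (Dn : ℝ) * ((ℓ : ℝ) * p) := by ring
    rw [heq]
    rw [ENNReal.ofReal_mul (by positivity), ENNReal.ofReal_mul (by positivity)]
    rw [ENNReal.ofReal_natCast, ENNReal.ofReal_natCast]
  exact (ENNReal.mul_le_mul_iff_right (by norm_num) (by norm_num)).mp h2
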